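/- Let A ∈ ℝ^{m×n} be a nonzero matrix, y ∈ ℝᵐ, μ, γ > 0, M := range(Aᵀ) with orthogonal projection P_M, and define F(x) := ½‖Ax − y‖₂² − μ·(⁽γ⁾‖·‖₁)(P_M x) for x ∈ ℝⁿ. Then F is convex on ℝⁿ if and only if μ ≤ γ·λ_min^{++}(AᵀA), where λ_min^{++}(AᵀA) denotes the smallest strictly positive eigenvalue of AᵀA. -/

import Mathlib

open Matrix
open scoped RealInnerProductSpace
noncomputable section

/-- The ℓ₁ norm on ℝⁿ. -/
def l1norm {n : ℕ} (x : EuclideanSpace ℝ (Fin n)) : ℝ := ∑ i, |x i|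

/-- The Moreau envelope of index `γ` of a real-valued function on ℝⁿ. -/
def moreauEnv {n : ℕ} (γ : ℝ) (f : EuclideanSpace ℝ (Fin n) → ℝ)
    (x : EuclideanSpace ℝ (Fin n)) : ℝ :=
  ⨅ y : EuclideanSpace ℝ (Fin n), (f y + ‖x - y‖ ^ 2 / (2 * γ))

variable {n : ℕ}

lemma l1norm_nonneg (x : EuclideanSpace ℝ (Fin n)) : 0 ≤ l1norm x :=
  Finset.sum_nonneg fun i _ => abs_nonneg _

lemma inner_le_l1 {γ : ℝ} {x : EuclideanSpace ℝ (Fin n)} (h : ∀ i, |x i| ≤ γ)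
    (y : EuclideanSpace ℝ (Fin n)) : ⟪x, y⟫ ≤ γ * l1norm y := by
  rw [PiLp.inner_apply, l1norm, Finset.mul_sum]
  apply Finset.sum_le_sum
  intro i _
  calc (inner ℝ (x i) (y i) : ℝ) = x i * y i := by simp [RCLike.inner_apply]; ring
    _ ≤ |x i * y i| := le_abs_self _
    _ = |x i| * |y i| := abs_mul _ _
    _ ≤ γ * |y i| := by
        apply mul_le_mul_of_nonneg_right (h i) (abs_nonneg _)

lemma moreau_bddBelow (γ : ℝ) (hγ : 0 < γ) (x : EuclideanSpace ℝ (Fin n)) :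
    BddBelow (Set.range fun y : EuclideanSpace ℝ (Fin n) => l1norm y + ‖x - y‖ ^ 2 / (2 * γ)) := by
  refine ⟨0, ?_⟩
  rintro r ⟨y, rfl⟩
  have := l1norm_nonneg y
  positivity

lemma moreau_le (γ : ℝ) (hγ : 0 < γ) (x : EuclideanSpace ℝ (Fin n)) :
    moreauEnv γ l1norm x ≤ ‖x‖ ^ 2 / (2 * γ) := by
  have := ciInf_le (moreau_bddBelow γ hγ x) 0
  simpa [moreauEnv, l1norm] using this

lemma moreau_small {γ : ℝ} (hγ : 0 < γ) {x : EuclideanSpace ℝ (Fin n)} (h : ∀ i, |x i| ≤ γ) :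
    moreauEnv γ l1norm x = ‖x‖ ^ 2 / (2 * γ) := by
  refine le_antisymm (moreau_le γ hγ x) (le_ciInf fun y => ?_)
  have h1 := inner_le_l1 h y
  have h2 := norm_sub_sq_real x y
  have h3 : (0:ℝ) ≤ ‖y‖ ^ 2 := sq_nonneg _
  have h4 := l1norm_nonneg y
  rw [h2, div_le_iff₀ (by positivity)]
  have h5 : (l1norm y + (‖x‖ ^ 2 - 2 * ⟪x, y⟫ + ‖y‖ ^ 2) / (2 * γ)) * (2*γ)
      = 2*γ*l1norm y + ‖x‖ ^ 2 - 2 * ⟪x, y⟫ + ‖y‖ ^ 2 := by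
    field_simp; ring
  rw [h5]
  nlinarith

/-- The concave correction term: `moreauEnv γ l1norm x = ‖x‖²/(2γ) - gEnv γ x`. -/
def gEnv (γ : ℝ) (x : EuclideanSpace ℝ (Fin n)) : ℝ :=
  ⨆ y : EuclideanSpace ℝ (Fin n), (⟪x, y⟫ / γ - l1norm y - ‖y‖ ^ 2 / (2 * γ))

lemma gEnv_term_le {γ : ℝ} (hγ : 0 < γ) (x y : EuclideanSpace ℝ (Fin n)) :
    ⟪x, y⟫ / γ - l1norm y - ‖y‖ ^ 2 / (2 * γ) ≤ ‖x‖ ^ 2 / (2 * γ) := by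
  have h2 := norm_sub_sq_real x y
  have h4 := l1norm_nonneg y
  have h5 : 2 * ⟪x, y⟫ - ‖y‖ ^ 2 ≤ ‖x‖ ^ 2 := by nlinarith [sq_nonneg ‖x - y‖]
  have key : ⟪x, y⟫ / γ - ‖y‖ ^ 2 / (2 * γ) ≤ ‖x‖ ^ 2 / (2 * γ) := by
    have : ⟪x, y⟫ / γ - ‖y‖ ^ 2 / (2 * γ) = (2 * ⟪x, y⟫ - ‖y‖ ^ 2) / (2 * γ) := by
      field_simp
    rw [this]
    exact div_le_div_of_nonneg_right h5 (by positivity) |>.trans_eq rfl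
  linarith

lemma gEnv_bddAbove {γ : ℝ} (hγ : 0 < γ) (x : EuclideanSpace ℝ (Fin n)) :
    BddAbove (Set.range fun y : EuclideanSpace ℝ (Fin n) =>
      ⟪x, y⟫ / γ - l1norm y - ‖y‖ ^ 2 / (2 * γ)) := by
  refine ⟨‖x‖ ^ 2 / (2 * γ), ?_⟩
  rintro r ⟨y, rfl⟩
  exact gEnv_term_le hγ x y

lemma moreau_eq_sub_gEnv {γ : ℝ} (hγ : 0 < γ) (x : EuclideanSpace ℝ (Fin n)) :
    moreauEnv γ l1norm x = ‖x‖ ^ 2 / (2 * γ) - gEnv γ x := by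
  unfold moreauEnv
  have hterm : ∀ y : EuclideanSpace ℝ (Fin n),
      l1norm y + ‖x - y‖ ^ 2 / (2 * γ)
        = ‖x‖ ^ 2 / (2 * γ) - (⟪x, y⟫ / γ - l1norm y - ‖y‖ ^ 2 / (2 * γ)) := by
    intro y
    rw [norm_sub_sq_real]
    field_simp
    ring
  refine le_antisymm ?_ ?_
  · rw [le_sub_comm]
    refine ciSup_le fun y => ?_
    have := ciInf_le (moreau_bddBelow γ hγ x) y
    rw [hterm y] at this
    linarith
  · refine le_ciInf fun y => ?_
    rw [hterm y]
    have := le_ciSup (gEnv_bddAbove hγ x) y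
    have h2 : (⟪x, y⟫ / γ - l1norm y - ‖y‖ ^ 2 / (2 * γ)) ≤ gEnv γ x := this
    linarith

lemma gEnv_convex {γ : ℝ} (hγ : 0 < γ) :
    ConvexOn ℝ Set.univ (gEnv (n := n) γ) := by
  refine ⟨convex_univ, fun x₁ _ x₂ _ a b ha hb hab => ?_⟩
  refine ciSup_le fun y => ?_
  have h1 : ⟪a • x₁ + b • x₂, y⟫ / γ - l1norm y - ‖y‖ ^ 2 / (2 * γ)
      = a * (⟪x₁, y⟫ / γ - l1norm y - ‖y‖ ^ 2 / (2 * γ))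
        + b * (⟪x₂, y⟫ / γ - l1norm y - ‖y‖ ^ 2 / (2 * γ)) := by
    rw [inner_add_left, real_inner_smul_left, real_inner_smul_left]
    linear_combination (l1norm y + ‖y‖ ^ 2 / (2 * γ)) * hab
  rw [h1]
  have t1 : (⟪x₁, y⟫ / γ - l1norm y - ‖y‖ ^ 2 / (2 * γ)) ≤ gEnv γ x₁ :=
    le_ciSup (gEnv_bddAbove hγ x₁) y
  have t2 : (⟪x₂, y⟫ / γ - l1norm y - ‖y‖ ^ 2 / (2 * γ)) ≤ gEnv γ x₂ :=
    le_ciSup (gEnv_bddAbove hγ x₂) y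
  have u1 := mul_le_mul_of_nonneg_left t1 ha
  have u2 := mul_le_mul_of_nonneg_left t2 hb
  simp only [smul_eq_mul]
  linarith

variable {m n : ℕ}

lemma adj_inner (A : Matrix (Fin m) (Fin n) ℝ) (w : EuclideanSpace ℝ (Fin m))
    (v : EuclideanSpace ℝ (Fin n)) :
    ⟪toEuclideanLin Aᵀ w, v⟫ = ⟪w, toEuclideanLin A v⟫ := by
  have h : Aᵀ = Aᴴ := (conjTranspose_eq_transpose_of_trivial A).symm
  rw [h, Matrix.toEuclideanLin_conjTranspose_eq_adjoint, LinearMap.adjoint_inner_left]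

lemma toEuclideanLin_mul_apply (A : Matrix (Fin m) (Fin n) ℝ) (u : EuclideanSpace ℝ (Fin n)) :
    toEuclideanLin (Aᵀ * A) u = toEuclideanLin Aᵀ (toEuclideanLin A u) := by
  simp [toEuclideanLin_apply, Matrix.mulVec_mulVec]

lemma norm_T_sq (A : Matrix (Fin m) (Fin n) ℝ) (u : EuclideanSpace ℝ (Fin n)) :
    ‖toEuclideanLin A u‖ ^ 2 = ⟪toEuclideanLin (Aᵀ * A) u, u⟫ := by
  rw [toEuclideanLin_mul_apply, adj_inner, real_inner_self_eq_norm_sq]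

lemma hermitian_AtA (A : Matrix (Fin m) (Fin n) ℝ) : (Aᵀ * A).IsHermitian := by
  rw [← conjTranspose_eq_transpose_of_trivial]
  exact isHermitian_conjTranspose_mul_self A

lemma eigen_toEuclideanLin (A : Matrix (Fin m) (Fin n) ℝ) (i : Fin n) :
    toEuclideanLin (Aᵀ * A) ((hermitian_AtA A).eigenvectorBasis i)
      = (hermitian_AtA A).eigenvalues i • (hermitian_AtA A).eigenvectorBasis i := by
  have h := (hermitian_AtA A).mulVec_eigenvectorBasis i
  ext j
  have := congrFun h j
  simpa [toEuclideanLin_apply] using this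

lemma eigen_norm_sq (A : Matrix (Fin m) (Fin n) ℝ) (i : Fin n) :
    (hermitian_AtA A).eigenvalues i
      = ‖toEuclideanLin A ((hermitian_AtA A).eigenvectorBasis i)‖ ^ 2 := by
  rw [norm_T_sq, eigen_toEuclideanLin, real_inner_smul_left]
  have : ‖(hermitian_AtA A).eigenvectorBasis i‖ = 1 :=
    (hermitian_AtA A).eigenvectorBasis.orthonormal.1 i
  rw [real_inner_self_eq_norm_sq, this]
  norm_num

lemma eigen_mem_S (A : Matrix (Fin m) (Fin n) ℝ) (i : Fin n)
    (hpos : 0 < (hermitian_AtA A).eigenvalues i) :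
    (hermitian_AtA A).eigenvalues i
      ∈ {t : ℝ | 0 < t ∧ ∃ v : Fin n → ℝ, v ≠ 0 ∧ (Aᵀ * A).mulVec v = t • v} := by
  refine ⟨hpos, ⇑((hermitian_AtA A).eigenvectorBasis i), ?_,
    (hermitian_AtA A).mulVec_eigenvectorBasis i⟩
  intro hv0
  apply (hermitian_AtA A).eigenvectorBasis.orthonormal.ne_zero i
  ext j
  exact congrFun hv0 j

lemma S_bddBelow (A : Matrix (Fin m) (Fin n) ℝ) :
    BddBelow {t : ℝ | 0 < t ∧ ∃ v : Fin n → ℝ, v ≠ 0 ∧ (Aᵀ * A).mulVec v = t • v} :=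
  ⟨0, fun _ ht => le_of_lt ht.1⟩

lemma spectral_key (A : Matrix (Fin m) (Fin n) ℝ) (u : EuclideanSpace ℝ (Fin n))
    (hu : u ∈ LinearMap.range (toEuclideanLin Aᵀ)) :
    sInf {t : ℝ | 0 < t ∧ ∃ v : Fin n → ℝ, v ≠ 0 ∧ (Aᵀ * A).mulVec v = t • v} * ‖u‖ ^ 2
      ≤ ‖toEuclideanLin A u‖ ^ 2 := by
  obtain ⟨w, rfl⟩ := hu
  let Λ : ℝ := sInf {t : ℝ | 0 < t ∧ ∃ v : Fin n → ℝ, v ≠ 0 ∧ (Aᵀ * A).mulVec v = t • v}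
  show Λ * ‖toEuclideanLin Aᵀ w‖ ^ 2 ≤ _
  have hB := hermitian_AtA A
  let e := (hermitian_AtA A).eigenvectorBasis
  let lam := (hermitian_AtA A).eigenvalues
  let u : EuclideanSpace ℝ (Fin n) := toEuclideanLin Aᵀ w
  let c : Fin n → ℝ := fun i => ⟪e i, u⟫
  have hsym : (toEuclideanLin (Aᵀ * A)).IsSymmetric :=
    (isHermitian_iff_isSymmetric (A := Aᵀ * A)).1 (hermitian_AtA A)
  have hczero : ∀ i, lam i = 0 → c i = 0 := by
    intro i h0
    have hT : toEuclideanLin A (e i) = 0 := by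
      have h0' : (hermitian_AtA A).eigenvalues i = 0 := h0
      have h1 := eigen_norm_sq A i
      rw [h0'] at h1
      exact norm_eq_zero.1 ((sq_eq_zero_iff).1 h1.symm)
    show ⟪e i, u⟫ = 0
    rw [real_inner_comm]
    show ⟪toEuclideanLin Aᵀ w, e i⟫ = 0
    rw [adj_inner, hT, inner_zero_right]
  have hlam_nonneg : ∀ i, 0 ≤ lam i := by
    intro i
    have h1 := eigen_norm_sq A i
    show 0 ≤ (hermitian_AtA A).eigenvalues i
    rw [h1]; positivity
  have hnorm_u : ‖u‖ ^ 2 = ∑ i, c i * c i := by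
    rw [← real_inner_self_eq_norm_sq, ← e.repr.inner_map_map u u, PiLp.inner_apply]
    refine Finset.sum_congr rfl fun i _ => ?_
    simp only [RCLike.inner_apply, starRingEnd_apply, star_trivial]
    rw [e.repr_apply_apply]
  have hBu : ∀ i, e.repr (toEuclideanLin (Aᵀ * A) u) i = lam i * c i := by
    intro i
    rw [e.repr_apply_apply, ← hsym (e i) u]
    show ⟪toEuclideanLin (Aᵀ * A) ((hermitian_AtA A).eigenvectorBasis i), u⟫ = _
    rw [eigen_toEuclideanLin A i, real_inner_smul_left]
  have hnorm_Tu : ‖toEuclideanLin A u‖ ^ 2 = ∑ i, lam i * c i * c i := by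
    rw [norm_T_sq, ← e.repr.inner_map_map (toEuclideanLin (Aᵀ * A) u) u, PiLp.inner_apply]
    refine Finset.sum_congr rfl fun i _ => ?_
    simp only [RCLike.inner_apply, starRingEnd_apply, star_trivial]
    rw [hBu i, e.repr_apply_apply]
    exact mul_comm _ _
  show Λ * ‖u‖ ^ 2 ≤ ‖toEuclideanLin A u‖ ^ 2
  rw [hnorm_u, hnorm_Tu, Finset.mul_sum]
  refine Finset.sum_le_sum fun i _ => ?_
  rcases eq_or_lt_of_le (hlam_nonneg i) with h0 | hpos
  · rw [hczero i h0.symm]; ring_nf; exact le_refl _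
  · have hmem := eigen_mem_S A i hpos
    have hle : Λ ≤ lam i := csInf_le (S_bddBelow A) hmem
    have := mul_le_mul_of_nonneg_right hle (mul_self_nonneg (c i))
    linarith

lemma T_proj (A : Matrix (Fin m) (Fin n) ℝ) (x : EuclideanSpace ℝ (Fin n)) :
    toEuclideanLin A
      ((Submodule.orthogonalProjection (LinearMap.range (toEuclideanLin Aᵀ)) x : EuclideanSpace ℝ (Fin n)))
      = toEuclideanLin A x := by
  set M := LinearMap.range (toEuclideanLin Aᵀ) with hM
  have hd : x - (Submodule.orthogonalProjection M x : EuclideanSpace ℝ (Fin n)) ∈ Mᗮ :=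
    Submodule.sub_starProjection_mem_orthogonal x
  set d := x - (Submodule.orthogonalProjection M x : EuclideanSpace ℝ (Fin n)) with hdd
  have h0 : toEuclideanLin A d = 0 := by
    rw [Submodule.mem_orthogonal] at hd
    have h1 : ⟪toEuclideanLin Aᵀ (toEuclideanLin A d), d⟫ = 0 :=
      hd _ (LinearMap.mem_range_self _ _)
    rw [adj_inner] at h1
    exact inner_self_eq_zero.1 h1
  have h2 := map_sub (toEuclideanLin A) x ((Submodule.orthogonalProjection M x : EuclideanSpace ℝ (Fin n)))
  rw [← hdd, h0] at h2
  rw [eq_comm, ← sub_eq_zero, h2.symm]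

lemma norm_combo {E : Type*} [NormedAddCommGroup E] [InnerProductSpace ℝ E]
    (a b : ℝ) (hab : a + b = 1) (u v : E) :
    ‖a • u + b • v‖ ^ 2 = a * ‖u‖ ^ 2 + b * ‖v‖ ^ 2 - a * b * ‖u - v‖ ^ 2 := by
  have h1 := norm_add_sq_real (a • u) (b • v)
  have h2 := norm_sub_sq_real u v
  have h3 : ⟪a • u, b • v⟫ = a * b * ⟪u, v⟫ := by
    rw [real_inner_smul_left, real_inner_smul_right]; ring
  have h4 : ‖a • u‖ ^ 2 = a ^ 2 * ‖u‖ ^ 2 := by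
    rw [norm_smul]; rw [mul_pow]; simp [sq_abs]
  have h5 : ‖b • v‖ ^ 2 = b ^ 2 * ‖v‖ ^ 2 := by
    rw [norm_smul]; rw [mul_pow]; simp [sq_abs]
  rw [h1, h3, h4, h5, h2]
  linear_combination (a * ‖u‖ ^ 2 + b * ‖v‖ ^ 2) * hab

lemma dot_self_nonneg {k : ℕ} (v : Fin k → ℝ) : 0 ≤ dotProduct v v :=
  Finset.sum_nonneg fun i _ => mul_self_nonneg (v i)

lemma S_nonempty (A : Matrix (Fin m) (Fin n) ℝ) (hA : A ≠ 0) :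
    Set.Nonempty {t : ℝ | 0 < t ∧ ∃ v : Fin n → ℝ, v ≠ 0 ∧ (Aᵀ * A).mulVec v = t • v} := by
  have hBne : Aᵀ * A ≠ 0 := by
    intro h
    apply hA
    ext i j
    have hdiag : (Aᵀ * A) j j = 0 := by rw [h]; rfl
    rw [Matrix.mul_apply] at hdiag
    have : ∀ k ∈ Finset.univ, Aᵀ j k * A k j = 0 := by
      intro k _
      refine (Finset.sum_eq_zero_iff_of_nonneg ?_).1 hdiag k (Finset.mem_univ k)
      intro l _
      rw [Matrix.transpose_apply]
      exact mul_self_nonneg _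
    have hij := this i (Finset.mem_univ i)
    rw [Matrix.transpose_apply] at hij
    simpa using mul_self_eq_zero.1 hij
  obtain ⟨v, t, ht0, hv0, hvec⟩ := (hermitian_AtA A).exists_eigenvector_of_ne_zero hBne
  have hdot : t * dotProduct v v = dotProduct (A.mulVec v) (A.mulVec v) := by
    calc t * dotProduct v v = dotProduct v (t • v) := by
          rw [dotProduct_smul]; simp [smul_eq_mul]
      _ = dotProduct v ((Aᵀ * A).mulVec v) := by rw [hvec]
      _ = dotProduct (A.mulVec v) (A.mulVec v) := by
          rw [← Matrix.mulVec_mulVec, dotProduct_mulVec, vecMul_transpose]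
  have hvv : 0 < dotProduct v v :=
    lt_of_le_of_ne (dot_self_nonneg v) fun h => hv0 (dotProduct_self_eq_zero.1 h.symm)
  have ht : 0 < t := by
    rcases lt_trichotomy t 0 with h | h | h
    · exfalso
      have := dot_self_nonneg (A.mulVec v)
      nlinarith
    · exact absurd h ht0
    · exact h
  exact ⟨t, ht, v, hv0, hvec⟩

set_option maxHeartbeats 1000000 in
/-- Proposition 2 of the paper.  The smooth part
`F(x) = ½‖Ax − y‖₂² − μ·(ᵞ‖·‖₁)(P_M x)` of the debiased sparse modeling objective
is convex on ℝⁿ if and only if `μ ≤ γ·λ_min^{++}(AᵀA)`, where `λ_min^{++}` is the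
smallest strictly positive eigenvalue of `AᵀA`. -/
theorem pmc_convexity_condition {m n : ℕ} (A : Matrix (Fin m) (Fin n) ℝ) (hA : A ≠ 0)
    (y : EuclideanSpace ℝ (Fin m)) (μ γ : ℝ) (hμ : 0 < μ) (hγ : 0 < γ) :
    ConvexOn ℝ Set.univ (fun x : EuclideanSpace ℝ (Fin n) =>
        ‖Matrix.toEuclideanLin A x - y‖ ^ 2 / 2 -
          μ * moreauEnv γ l1norm
            ((Submodule.orthogonalProjection (LinearMap.range (Matrix.toEuclideanLin Aᵀ)) x :
              EuclideanSpace ℝ (Fin n))))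
      ↔ μ ≤ γ * sInf {t : ℝ | 0 < t ∧ ∃ v : Fin n → ℝ, v ≠ 0 ∧ (Aᵀ * A).mulVec v = t • v} := by
  classical
  set S : Set ℝ := {t : ℝ | 0 < t ∧ ∃ v : Fin n → ℝ, v ≠ 0 ∧ (Aᵀ * A).mulVec v = t • v} with hS
  set M : Submodule ℝ (EuclideanSpace ℝ (Fin n)) :=
    LinearMap.range (Matrix.toEuclideanLin Aᵀ) with hM
  let T : EuclideanSpace ℝ (Fin n) →ₗ[ℝ] EuclideanSpace ℝ (Fin m) := Matrix.toEuclideanLin A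
  let Pl : EuclideanSpace ℝ (Fin n) →ₗ[ℝ] EuclideanSpace ℝ (Fin n) :=
    M.subtype ∘ₗ (Submodule.orthogonalProjection M).toLinearMap
  have hProj : ∀ x : EuclideanSpace ℝ (Fin n),
      (Submodule.orthogonalProjection M x : EuclideanSpace ℝ (Fin n)) = Pl x := fun _ => rfl
  have hg0 : ∀ x : EuclideanSpace ℝ (Fin n), (∀ i, |x i| ≤ γ) → gEnv γ x = 0 := by
    intro x hx
    have h1 := moreau_eq_sub_gEnv hγ x
    rw [moreau_small hγ hx] at h1
    linarith
  have hFeq : (fun x : EuclideanSpace ℝ (Fin n) =>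
        ‖Matrix.toEuclideanLin A x - y‖ ^ 2 / 2 -
          μ * moreauEnv γ l1norm
            ((Submodule.orthogonalProjection M x : EuclideanSpace ℝ (Fin n))))
      = fun x : EuclideanSpace ℝ (Fin n) =>
          (‖T x - y‖ ^ 2 / 2 - μ / (2 * γ) * ‖Pl x‖ ^ 2) + μ * gEnv γ (Pl x) := by
    funext x
    rw [hProj, moreau_eq_sub_gEnv hγ]
    field_simp
    ring
  rw [hFeq]
  constructor
  · -- convexity implies the eigenvalue bound
    intro hconv
    have hSne : S.Nonempty := S_nonempty A hA
    have hcore : ∀ t ∈ S, μ / γ ≤ t := by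
      rintro t ⟨ht, v, hv0, hvec⟩
      set ve : EuclideanSpace ℝ (Fin n) := (WithLp.equiv 2 (Fin n → ℝ)).symm v with hve
      have hve_app : ∀ i, ve i = v i := fun i => rfl
      have hve0 : ve ≠ 0 := by
        intro h
        apply hv0
        funext i
        have := congrFun (congrArg (WithLp.equiv 2 (Fin n → ℝ)) h) i
        exact this
      have hBve : Matrix.toEuclideanLin (Aᵀ * A) ve = t • ve := by
        rw [hve, WithLp.equiv_symm_apply, toEuclideanLin_apply_piLp_toLp, hvec]
        ext i
        simp
      have hTve : Matrix.toEuclideanLin Aᵀ (T ve) = t • ve := by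
        rw [← toEuclideanLin_mul_apply, hBve]
      have hveM : ve ∈ M := by
        refine ⟨t⁻¹ • T ve, ?_⟩
        rw [_root_.map_smul, hTve, smul_smul, inv_mul_cancel₀ (ne_of_gt ht), one_smul]
      have hPve : Pl ve = ve := by
        rw [← hProj]
        exact Submodule.starProjection_eq_self_iff.2 hveM
      have hw2 : ‖T ve‖ ^ 2 = t * ‖ve‖ ^ 2 := by
        rw [show ‖T ve‖ ^ 2 = ‖Matrix.toEuclideanLin A ve‖ ^ 2 from rfl, norm_T_sq, hBve,
          real_inner_smul_left, real_inner_self_eq_norm_sq]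
      set C : ℝ := l1norm ve with hC
      have hC0 : 0 ≤ C := l1norm_nonneg ve
      set s : ℝ := γ / (1 + C) with hs
      have hspos : 0 < s := div_pos hγ (by linarith)
      have hsmall : ∀ σ : ℝ, |σ| ≤ s → ∀ i, |(σ • ve) i| ≤ γ := by
        intro σ hσ i
        have h1 : (σ • ve) i = σ * ve i := rfl
        rw [h1, abs_mul]
        have h2 : |ve i| ≤ C := by
          rw [hC]
          exact Finset.single_le_sum (f := fun j => |ve j|)
            (fun j _ => abs_nonneg _) (Finset.mem_univ i)
        have h3 : |σ| * |ve i| ≤ s * (1 + C) := by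
          apply mul_le_mul hσ (by linarith) (abs_nonneg _) (le_of_lt hspos)
        have h4 : s * (1 + C) = γ := by
          rw [hs]; field_simp
        linarith
      have hgσ : ∀ σ : ℝ, |σ| ≤ s → gEnv γ (σ • ve) = 0 := fun σ hσ => hg0 _ (hsmall σ hσ)
      have hPσ : ∀ σ : ℝ, Pl (σ • ve) = σ • ve := by
        intro σ; rw [_root_.map_smul, hPve]
      have hTσ : ∀ σ : ℝ, T (σ • ve) = σ • T ve := fun σ => LinearMap.map_smul T σ ve
      have habs : |s| ≤ s := by rw [abs_of_pos hspos]
      have habs' : |(-s)| ≤ s := by rw [abs_neg, abs_of_pos hspos]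
      have hcomb : (1/2 : ℝ) • (s • ve) + (1/2 : ℝ) • ((-s) • ve) = 0 := by
        rw [neg_smul, smul_neg, add_neg_cancel]
      have hineq := hconv.2 (Set.mem_univ (s • ve)) (Set.mem_univ ((-s) • ve))
        (by norm_num : (0:ℝ) ≤ 1/2) (by norm_num : (0:ℝ) ≤ 1/2) (by norm_num)
      rw [hcomb] at hineq
      simp only [smul_eq_mul] at hineq
      have hzero : ∀ i, |(0 : EuclideanSpace ℝ (Fin n)) i| ≤ γ := by
        intro i
        simpa using hγ.le
      rw [hPσ s, hPσ (-s), hgσ s habs, hgσ (-s) habs', hTσ s, hTσ (-s),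
        map_zero Pl, map_zero T, hg0 0 hzero] at hineq
      have hnve : 0 < ‖ve‖ ^ 2 := by
        have : 0 < ‖ve‖ := norm_pos_iff.2 hve0
        positivity
      have hsve : ‖s • ve‖ ^ 2 = s ^ 2 * ‖ve‖ ^ 2 := by
        rw [norm_smul, mul_pow, Real.norm_eq_abs, sq_abs]
      have hnsve : ‖(-s) • ve‖ ^ 2 = s ^ 2 * ‖ve‖ ^ 2 := by
        rw [norm_smul, mul_pow, Real.norm_eq_abs, sq_abs]; ring
      have hne : ‖(-s) • T ve - y‖ = ‖s • T ve + y‖ := by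
        rw [neg_smul, show -(s • T ve) - y = -(s • T ve + y) by abel, norm_neg]
      have hpsq : ‖s • T ve‖ ^ 2 = s ^ 2 * ‖T ve‖ ^ 2 := by
        rw [norm_smul, mul_pow, Real.norm_eq_abs, sq_abs]
      have hplus : ‖s • T ve - y‖ ^ 2 + ‖(-s) • T ve - y‖ ^ 2
          = 2 * s ^ 2 * ‖T ve‖ ^ 2 + 2 * ‖y‖ ^ 2 := by
        rw [hne]
        have e1 := norm_sub_sq_real (s • T ve) y
        have e2 := norm_add_sq_real (s • T ve) y
        rw [hpsq] at e1 e2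
        linarith
      have h0y : ‖(0 : EuclideanSpace ℝ (Fin m)) - y‖ ^ 2 = ‖y‖ ^ 2 := by
        rw [zero_sub, norm_neg]
      rw [h0y, hsve, hnsve] at hineq
      have hn0 : ‖(0 : EuclideanSpace ℝ (Fin n))‖ ^ 2 = 0 := by simp
      rw [hn0] at hineq
      have hs2 : 0 < s ^ 2 * ‖ve‖ ^ 2 := by positivity
      have hc : μ / γ = μ / (2 * γ) * 2 := by ring
      rw [hc]
      have hw2' : s ^ 2 * ‖T ve‖ ^ 2 = s ^ 2 * (t * ‖ve‖ ^ 2) := by rw [hw2]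
      have key : (μ / (2 * γ) * 2) * (s ^ 2 * ‖ve‖ ^ 2) ≤ t * (s ^ 2 * ‖ve‖ ^ 2) := by
        linarith [hineq, hplus, hw2']
      exact (mul_le_mul_iff_of_pos_right hs2).1 key
    have h2 : μ / γ ≤ sInf S := le_csInf hSne hcore
    calc μ = γ * (μ / γ) := by field_simp
      _ ≤ γ * sInf S := by
          exact mul_le_mul_of_nonneg_left h2 (le_of_lt hγ)
  · -- eigenvalue bound implies convexity
    intro hle
    have hΛ : μ / γ ≤ sInf S := by
      rw [div_le_iff₀ hγ, mul_comm]
      exact hle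
    have keyP : ∀ u : EuclideanSpace ℝ (Fin n),
        μ / (2 * γ) * ‖Pl u‖ ^ 2 * 2 ≤ ‖T u‖ ^ 2 := by
      intro u
      have h1 : Pl u ∈ M := by rw [← hProj]; exact SetLike.coe_mem _
      have h2 := spectral_key A (Pl u) h1
      have h3 : ‖Matrix.toEuclideanLin A (Pl u)‖ ^ 2 = ‖T u‖ ^ 2 := by
        rw [← hProj]
        rw [show (Matrix.toEuclideanLin A : _) = T from rfl] at *
        exact congrArg (fun z => ‖z‖ ^ 2) (T_proj A u)
      have h4 : μ / γ * ‖Pl u‖ ^ 2 ≤ sInf S * ‖Pl u‖ ^ 2 :=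
        mul_le_mul_of_nonneg_right hΛ (sq_nonneg _)
      have h5 : μ / (2 * γ) * ‖Pl u‖ ^ 2 * 2 = μ / γ * ‖Pl u‖ ^ 2 := by
        field_simp
      rw [h5]
      calc μ / γ * ‖Pl u‖ ^ 2 ≤ sInf S * ‖Pl u‖ ^ 2 := h4
        _ ≤ ‖Matrix.toEuclideanLin A (Pl u)‖ ^ 2 := h2
        _ = ‖T u‖ ^ 2 := h3
    have hq : ConvexOn ℝ (Set.univ : Set (EuclideanSpace ℝ (Fin n)))
        (fun x => ‖T x - y‖ ^ 2 / 2 - μ / (2 * γ) * ‖Pl x‖ ^ 2) := by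
      refine ⟨convex_univ, fun x₁ _ x₂ _ a b ha hb hab => ?_⟩
      simp only [smul_eq_mul]
      have e1 : T (a • x₁ + b • x₂) - y = a • (T x₁ - y) + b • (T x₂ - y) := by
        rw [map_add, _root_.map_smul, _root_.map_smul]
        match_scalars
        all_goals linarith
      have e2 : Pl (a • x₁ + b • x₂) = a • Pl x₁ + b • Pl x₂ := by
        rw [map_add, _root_.map_smul, _root_.map_smul]
      rw [e1, e2, norm_combo a b hab, norm_combo a b hab]
      have e3 : (T x₁ - y) - (T x₂ - y) = T (x₁ - x₂) := by rw [map_sub]; abel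
      have e4 : Pl x₁ - Pl x₂ = Pl (x₁ - x₂) := (map_sub Pl x₁ x₂).symm
      rw [e3, e4]
      have hk := keyP (x₁ - x₂)
      have hab0 : 0 ≤ a * b := mul_nonneg ha hb
      nlinarith [mul_le_mul_of_nonneg_left hk hab0]
    have hgc : ConvexOn ℝ (Set.univ : Set (EuclideanSpace ℝ (Fin n)))
        (fun x => μ * gEnv γ (Pl x)) := by
      have h1 := ((gEnv_convex (n := n) hγ).smul (le_of_lt hμ)).comp_linearMap Pl
      exact h1
    exact hq.add hgc
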